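/- Let G = (V, E) be a cubic (3-regular) simple graph and let (S, C, H, M_G) be the associated assignment problem with couples. If the target matrix M_G is decomposable, i.e., M_G is a convex combination of deterministic assignment matrices, then G admits a proper 3-edge-coloring. -/
import Mathlib


open Finset

/-- `(S, C, H, M)` (with `I`, `H` types of interns and hospitals) is an assignment problem
with couples: `S` is the set of single interns, `C` the set of couples (ordered pairs of
members), every intern is a single or a member of a couple, members of couples are distinct
from each other, from the singles, and from members of other couples, `M ∈ [0,1]^{I×H}`,
each row of `M` sums to `1`, and both members of a couple have identical rows. -/
def IsCouplesProblem {I H : Type*} [Fintype I] [Fintype H]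
    (S : Finset I) (C : Finset (I × I)) (M : I → H → ℝ) : Prop :=
  (∀ i : I, i ∈ S ∨ ∃ c ∈ C, i = c.1 ∨ i = c.2) ∧
  (∀ c ∈ C, c.1 ∉ S ∧ c.2 ∉ S ∧ c.1 ≠ c.2) ∧
  (∀ c ∈ C, ∀ c' ∈ C, c ≠ c' →
    c.1 ≠ c'.1 ∧ c.1 ≠ c'.2 ∧ c.2 ≠ c'.1 ∧ c.2 ≠ c'.2) ∧
  (∀ (i : I) (h : H), 0 ≤ M i h ∧ M i h ≤ 1) ∧
  (∀ i : I, ∑ h : H, M i h = 1) ∧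
  (∀ c ∈ C, ∀ h : H, M c.1 h = M c.2 h)

/-- `M'` is a deterministic assignment matrix with respect to the problem with couples `C`
and target matrix `M`: its entries are in `{0,1}`, rows sum to `1`, both members of each
couple have identical rows, and each column sum equals the capacity `q_h = ∑ i, M i h`. -/
def IsDeterministicAssignment {I H : Type*} [Fintype I] [Fintype H]
    (C : Finset (I × I)) (M M' : I → H → ℝ) : Prop :=
  (∀ (i : I) (h : H), M' i h = 0 ∨ M' i h = 1) ∧
  (∀ i : I, ∑ h : H, M' i h = 1) ∧
  (∀ c ∈ C, ∀ h : H, M' c.1 h = M' c.2 h) ∧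
  (∀ h : H, ∑ i : I, M' i h = ∑ i : I, M i h)

/-- `M` is decomposable: it is a convex combination (with weights in `(0,1)`) of
deterministic assignment matrices. -/
def Decomposable {I H : Type*} [Fintype I] [Fintype H]
    (C : Finset (I × I)) (M : I → H → ℝ) : Prop :=
  ∃ (K : ℕ) (lam : Fin K → ℝ) (Ms : Fin K → I → H → ℝ),
    (∀ k, 0 < lam k ∧ lam k < 1) ∧ (∑ k, lam k = 1) ∧
    (∀ k, IsDeterministicAssignment C M (Ms k)) ∧
    (∀ (i : I) (h : H), M i h = ∑ k, lam k * Ms k i h)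


section CubicGraph

variable {V : Type*} [Fintype V] [DecidableEq V] (G : SimpleGraph V) [DecidableRel G.Adj]

/-- The edges of `G`, as a type. -/
abbrev GEdge := {e : Sym2 V // e ∈ G.edgeSet}

/-- The interns of the assignment problem associated to `G`: for each edge `e` there is
one couple (two members, indexed by `Bool`) and six singles, indexed by a color
`i ∈ {1,2,3}` together with an endpoint `w` of `e`. -/
abbrev GIntern :=
  (GEdge G × Bool) ⊕ {p : GEdge G × Fin 3 × V // p.2.2 ∈ (p.1 : Sym2 V)}

/-- The hospitals of the assignment problem associated to `G`: for each edge `e` the three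
hospitals `A(e), B(e), C(e)` (indexed by `GEdge G × Fin 3`), and for each vertex `v` and
color `i` the hospital `(v, i)`. -/
abbrev GHospital := (GEdge G × Fin 3) ⊕ (V × Fin 3)

/-- The target matrix associated to `G`: the couple of edge `e` has probability `1/3` at
each of `A(e), B(e), C(e)`; the single of edge `e`, color `i` and endpoint `w` has
probability `2/3` at the `i`-th hospital of `e` and probability `1/3` at hospital
`(w, i)`. -/
noncomputable def GM : GIntern G → GHospital G → ℝ
  | Sum.inl (e, _), Sum.inl (e', _) => if e' = e then 1 / 3 else 0
  | Sum.inl _, Sum.inr _ => 0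
  | Sum.inr p, Sum.inl (e', i') => if e' = p.1.1 ∧ i' = p.1.2.1 then 2 / 3 else 0
  | Sum.inr p, Sum.inr (v, i') => if v = p.1.2.2 ∧ i' = p.1.2.1 then 1 / 3 else 0

/-- The set of single interns of the problem associated to `G`. -/
def GS : Finset (GIntern G) := Finset.univ.filter fun i => i.isRight

instance : DecidableEq (GIntern G × GIntern G) := instDecidableEqProd

/-- The set of couples of the problem associated to `G`: one couple per edge. -/
def GC : Finset (GIntern G × GIntern G) :=
  Finset.univ.image fun e : GEdge G => (Sum.inl (e, false), Sum.inl (e, true))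



lemma sum_if_const {α : Type*} [Fintype α] (P : Prop) [Decidable P] (f : α → ℝ) :
    ∑ x : α, (if P then f x else 0) = if P then ∑ x, f x else 0 := by
  split_ifs <;> simp

lemma sum_if_mem_sym2 {V : Type*} [Fintype V] [DecidableEq V] (es : Sym2 V)
    (hd : ¬ es.IsDiag) (c : ℝ) :
    ∑ v : V, (if v ∈ es then c else 0) = c + c := by
  induction es using Sym2.inductionOn with
  | _ a b =>
    have hab : a ≠ b := by simpa using hd
    have h : ∀ v : V, (if v ∈ s(a, b) then c else 0)
        = (if a = v then c else 0) + (if b = v then c else 0) := by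
      intro v
      by_cases h1 : v = a <;> by_cases h2 : v = b <;>
        simp_all [Sym2.mem_iff, eq_comm]
    rw [Finset.sum_congr rfl fun v _ => h v, Finset.sum_add_distrib,
      Finset.sum_ite_eq Finset.univ a fun _ => c,
      Finset.sum_ite_eq Finset.univ b fun _ => c]
    simp

lemma sum_gsub (g : GEdge G × Fin 3 × V → ℝ) :
    ∑ p : {p : GEdge G × Fin 3 × V // p.2.2 ∈ (p.1 : Sym2 V)}, g p.val
      = ∑ q : GEdge G × Fin 3 × V, if q.2.2 ∈ (q.1 : Sym2 V) then g q else 0 := by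
  rw [← Finset.sum_filter]
  exact (Finset.sum_subtype _ (by simp) g).symm

lemma sum_gedge_if (hreg : G.IsRegularOfDegree 3) (v : V) (c : ℝ) :
    ∑ e : GEdge G, (if v ∈ (e : Sym2 V) then c else 0) = 3 * c := by
  rw [← Finset.sum_subtype G.edgeFinset (fun x => G.mem_edgeFinset)
      (fun e => if v ∈ e then c else 0)]
  rw [Finset.sum_ite, Finset.sum_const, Finset.sum_const_zero, add_zero,
    ← SimpleGraph.incidenceFinset_eq_filter, SimpleGraph.card_incidenceFinset_eq_degree,
    hreg v]
  simp [mul_comm]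

lemma cap_inl (e : GEdge G) (i : Fin 3) :
    ∑ x : GIntern G, GM G x (Sum.inl (e, i)) = 2 := by
  rw [Fintype.sum_sum_type]
  have h1 : ∑ a : GEdge G × Bool, GM G (Sum.inl a) (Sum.inl (e, i)) = 1/3 + 1/3 := by
    simp only [GM]
    rw [Fintype.sum_prod_type_right]
    simp [Finset.sum_ite_eq]
    norm_num
  have h2 : ∑ p : {p : GEdge G × Fin 3 × V // p.2.2 ∈ (p.1 : Sym2 V)},
      GM G (Sum.inr p) (Sum.inl (e, i)) = 2/3 + 2/3 := by
    have hg : ∀ p : {p : GEdge G × Fin 3 × V // p.2.2 ∈ (p.1 : Sym2 V)},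
        GM G (Sum.inr p) (Sum.inl (e, i))
          = (fun q : GEdge G × Fin 3 × V =>
              if e = q.1 ∧ i = q.2.1 then (2:ℝ)/3 else 0) p.val := fun p => rfl
    rw [Finset.sum_congr rfl fun p _ => hg p,
      sum_gsub G (fun q : GEdge G × Fin 3 × V => if e = q.1 ∧ i = q.2.1 then (2:ℝ)/3 else 0)]
    have hq : ∀ q : GEdge G × Fin 3 × V,
        (if q.2.2 ∈ (q.1 : Sym2 V) then (if e = q.1 ∧ i = q.2.1 then (2:ℝ)/3 else 0) else 0)
        = if e = q.1 then (if i = q.2.1 then (if q.2.2 ∈ (q.1 : Sym2 V) then (2:ℝ)/3 else 0) else 0) else 0 := by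
      intro q; split_ifs <;> simp_all
    rw [Finset.sum_congr rfl fun q _ => hq q, Fintype.sum_prod_type]
    have : ∀ e' : GEdge G, (∑ r : Fin 3 × V, if e = e' then
        (if i = r.1 then (if r.2 ∈ (e' : Sym2 V) then (2:ℝ)/3 else 0) else 0) else 0)
        = if e = e' then (∑ r : Fin 3 × V,
            (if i = r.1 then (if r.2 ∈ (e' : Sym2 V) then (2:ℝ)/3 else 0) else 0)) else 0 :=
      fun e' => sum_if_const _ _
    rw [Finset.sum_congr rfl fun e' _ => this e', Finset.sum_ite_eq]
    simp only [Finset.mem_univ, if_true]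
    rw [Fintype.sum_prod_type]
    have : ∀ r1 : Fin 3, (∑ r2 : V, if i = r1 then
        (if r2 ∈ (e : Sym2 V) then (2:ℝ)/3 else 0) else 0)
        = if i = r1 then (∑ r2 : V, (if r2 ∈ (e : Sym2 V) then (2:ℝ)/3 else 0)) else 0 :=
      fun r1 => sum_if_const _ _
    rw [Finset.sum_congr rfl fun r1 _ => this r1, Finset.sum_ite_eq]
    simp only [Finset.mem_univ, if_true]
    exact sum_if_mem_sym2 _ (G.not_isDiag_of_mem_edgeSet e.2) _
  rw [h1, h2]; norm_num

lemma cap_inr (hreg : G.IsRegularOfDegree 3) (v : V) (i : Fin 3) :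
    ∑ x : GIntern G, GM G x (Sum.inr (v, i)) = 1 := by
  rw [Fintype.sum_sum_type]
  have h1 : ∑ a : GEdge G × Bool, GM G (Sum.inl a) (Sum.inr (v, i)) = 0 := by
    simp [GM]
  have h2 : ∑ p : {p : GEdge G × Fin 3 × V // p.2.2 ∈ (p.1 : Sym2 V)},
      GM G (Sum.inr p) (Sum.inr (v, i)) = 1 := by
    have hg : ∀ p : {p : GEdge G × Fin 3 × V // p.2.2 ∈ (p.1 : Sym2 V)},
        GM G (Sum.inr p) (Sum.inr (v, i))
          = (fun q : GEdge G × Fin 3 × V =>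
              if v = q.2.2 ∧ i = q.2.1 then (1:ℝ)/3 else 0) p.val := fun p => rfl
    rw [Finset.sum_congr rfl fun p _ => hg p,
      sum_gsub G (fun q : GEdge G × Fin 3 × V => if v = q.2.2 ∧ i = q.2.1 then (1:ℝ)/3 else 0)]
    have hq : ∀ q : GEdge G × Fin 3 × V,
        (if q.2.2 ∈ (q.1 : Sym2 V) then (if v = q.2.2 ∧ i = q.2.1 then (1:ℝ)/3 else 0) else 0)
        = if i = q.2.1 then (if v = q.2.2 then (if v ∈ (q.1 : Sym2 V) then (1:ℝ)/3 else 0) else 0) else 0 := by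
      rintro ⟨e', i', w⟩
      by_cases hD : v = w <;> by_cases hC : i = i' <;>
        by_cases hE : w ∈ (e' : Sym2 V) <;> simp [hD, hC, hE]
    rw [Finset.sum_congr rfl fun q _ => hq q, Fintype.sum_prod_type]
    have step : ∀ e' : GEdge G,
        (∑ r : Fin 3 × V, if i = r.1 then
          (if v = r.2 then (if v ∈ (e' : Sym2 V) then (1:ℝ)/3 else 0) else 0) else 0)
        = if v ∈ (e' : Sym2 V) then (1:ℝ)/3 else 0 := by
      intro e'
      rw [Fintype.sum_prod_type]
      have h3 : ∀ i' : Fin 3, (∑ w : V, if i = i' then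
          (if v = w then (if v ∈ (e' : Sym2 V) then (1:ℝ)/3 else 0) else 0) else 0)
          = if i = i' then (if v ∈ (e' : Sym2 V) then (1:ℝ)/3 else 0) else 0 := by
        intro i'
        by_cases h : i = i' <;> simp [h, Finset.sum_ite_eq]
      rw [Finset.sum_congr rfl fun i' _ => h3 i', Finset.sum_ite_eq]
      simp
    rw [Finset.sum_congr rfl fun e' _ => step e', sum_gedge_if G hreg]
    norm_num
  rw [h1, h2]; norm_num

/-- if the target matrix of the assignment problem with couples
associated to a cubic simple graph `G` is decomposable, then `G` admits a proper
3-edge-coloring. -/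
theorem cubic_decomposable_colorable (hreg : G.IsRegularOfDegree 3)
    (hdec : Decomposable (GC G) (GM G)) :
    ∃ χ : GEdge G → Fin 3, ∀ e e' : GEdge G, e ≠ e' →
      (∃ v : V, v ∈ (e : Sym2 V) ∧ v ∈ (e' : Sym2 V)) → χ e ≠ χ e' := by
  obtain ⟨K, lam, Ms, hlam, hsum, hdet, hM⟩ := hdec
  have hK : 0 < K := by
    by_contra h
    push_neg at h
    have hK0 : K = 0 := Nat.le_zero.mp h
    subst hK0
    simp at hsum
  set k0 : Fin K := ⟨0, hK⟩ with hk0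
  set M' := Ms k0 with hM'def
  obtain ⟨hzo, hrow, hcp, hcol⟩ := hdet k0
  have hnn : ∀ (x : GIntern G) (h : GHospital G), 0 ≤ M' x h := by
    intro x h; rcases hzo x h with h0 | h0 <;> rw [hM'def, h0] <;> norm_num
  have hsupp : ∀ (x : GIntern G) (h : GHospital G), GM G x h = 0 → M' x h = 0 := by
    intro x h h0
    have hterm : ∀ k : Fin K, 0 ≤ lam k * Ms k x h := by
      intro k
      apply mul_nonneg (hlam k).1.le
      rcases (hdet k).1 x h with h1 | h1 <;> rw [h1] <;> norm_num
    have hz : ∑ k, lam k * Ms k x h = 0 := by rw [← hM x h, h0]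
    have hk := (Finset.sum_eq_zero_iff_of_nonneg (fun k _ => hterm k)).1 hz k0
      (Finset.mem_univ _)
    rcases mul_eq_zero.1 hk with h1 | h1
    · exact absurd h1 (ne_of_gt (hlam k0).1)
    · exact h1
  have hcouple : ∀ (e : GEdge G) (h : GHospital G),
      M' (Sum.inl (e, false)) h = M' (Sum.inl (e, true)) h := by
    intro e h
    exact hcp (Sum.inl (e, false), Sum.inl (e, true))
      (Finset.mem_image.2 ⟨e, Finset.mem_univ e, rfl⟩) h
  have hchoice : ∀ e : GEdge G, ∃ i : Fin 3,
      M' (Sum.inl (e, false)) (Sum.inl (e, i)) = 1 := by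
    intro e
    by_contra hcon
    push_neg at hcon
    have hall : ∀ h : GHospital G, M' (Sum.inl (e, false)) h = 0 := by
      intro h
      match h with
      | Sum.inr p => exact hsupp _ _ rfl
      | Sum.inl (e', j) =>
        by_cases he : e' = e
        · subst he
          rcases hzo (Sum.inl (e', false)) (Sum.inl (e', j)) with h0 | h0
          · exact h0
          · exact absurd h0 (hcon j)
        · exact hsupp _ _ (if_neg he)
    have h1 := hrow (Sum.inl (e, false))
    rw [Finset.sum_eq_zero (fun h _ => hall h)] at h1
    norm_num at h1
  choose χ hχ using hchoice
  have key : ∀ (f : GEdge G) (w : V) (hw : w ∈ (f : Sym2 V)),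
      M' (Sum.inr ⟨(f, χ f, w), hw⟩) (Sum.inr (w, χ f)) = 1 := by
    intro f w hw
    have hcolsum : ∑ x : GIntern G, M' x (Sum.inl (f, χ f)) = 2 := by
      rw [hcol]; exact cap_inl G f (χ f)
    have hinl : ∑ a : GEdge G × Bool, M' (Sum.inl a) (Sum.inl (f, χ f)) = 2 := by
      rw [Fintype.sum_prod_type, Finset.sum_eq_single f]
      · rw [Fintype.sum_bool, ← hcouple f (Sum.inl (f, χ f)), hχ f]
        norm_num
      · intro e' _ hne
        apply Finset.sum_eq_zero
        intro b _
        exact hsupp _ _ (if_neg (fun hc => hne hc.symm))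
      · intro h; exact absurd (Finset.mem_univ f) h
    have hinrzero : ∀ p : {p : GEdge G × Fin 3 × V // p.2.2 ∈ (p.1 : Sym2 V)},
        M' (Sum.inr p) (Sum.inl (f, χ f)) = 0 := by
      have hsplit := hcolsum
      rw [Fintype.sum_sum_type, hinl] at hsplit
      have hz : ∑ p : {p : GEdge G × Fin 3 × V // p.2.2 ∈ (p.1 : Sym2 V)},
          M' (Sum.inr p) (Sum.inl (f, χ f)) = 0 := by linarith
      intro p
      exact (Finset.sum_eq_zero_iff_of_nonneg (fun p _ => hnn _ _)).1 hz p
        (Finset.mem_univ _)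
    have hrowsum := hrow (Sum.inr ⟨(f, χ f, w), hw⟩)
    rw [Fintype.sum_sum_type] at hrowsum
    have hL : ∑ a : GEdge G × Fin 3, M' (Sum.inr ⟨(f, χ f, w), hw⟩) (Sum.inl a) = 0 := by
      apply Finset.sum_eq_zero
      rintro ⟨e', j⟩ _
      by_cases hq : e' = f ∧ j = χ f
      · obtain ⟨rfl, rfl⟩ := hq
        exact hinrzero _
      · exact hsupp _ _ (if_neg hq)
    have hR : ∑ b : V × Fin 3, M' (Sum.inr ⟨(f, χ f, w), hw⟩) (Sum.inr b)
        = M' (Sum.inr ⟨(f, χ f, w), hw⟩) (Sum.inr (w, χ f)) := by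
      apply Finset.sum_eq_single (w, χ f)
      · rintro ⟨u, j⟩ _ hne
        exact hsupp _ _ (if_neg (fun hc => hne (Prod.ext hc.1 hc.2)))
      · intro h; exact absurd (Finset.mem_univ _) h
    rw [hL, hR, zero_add] at hrowsum
    exact hrowsum
  refine ⟨χ, ?_⟩
  rintro e e' hne ⟨v, hv, hv'⟩ heq
  have hcolv : ∑ x : GIntern G, M' x (Sum.inr (v, χ e)) = 1 := by
    rw [hcol]; exact cap_inr G hreg v (χ e)
  have h1 : M' (Sum.inr ⟨(e, χ e, v), hv⟩) (Sum.inr (v, χ e)) = 1 := key e v hv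
  have h2 : M' (Sum.inr ⟨(e', χ e', v), hv'⟩) (Sum.inr (v, χ e)) = 1 := by
    rw [heq]; exact key e' v hv'
  have hne12 : (Sum.inr ⟨(e, χ e, v), hv⟩ : GIntern G) ≠ Sum.inr ⟨(e', χ e', v), hv'⟩ := by
    intro hc
    have h3 : ((e, χ e, v) : GEdge G × Fin 3 × V) = (e', χ e', v) :=
      congrArg Subtype.val (Sum.inr.inj hc)
    exact hne (congrArg Prod.fst h3)
  have hge : ∑ x ∈ ({Sum.inr ⟨(e, χ e, v), hv⟩, Sum.inr ⟨(e', χ e', v), hv'⟩} :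
      Finset (GIntern G)), M' x (Sum.inr (v, χ e))
      ≤ ∑ x : GIntern G, M' x (Sum.inr (v, χ e)) :=
    Finset.sum_le_sum_of_subset_of_nonneg (Finset.subset_univ _) (fun x _ _ => hnn x _)
  rw [Finset.sum_pair hne12, h1, h2, hcolv] at hge
  linarith

end CubicGraph
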